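/- (Johnson's formula) Let a, b, c be positive integers with gcd(a, b, c) = 1 and set m = gcd(a, b). Assume a/m ≥ 2, b/m ≥ 2, and c ≥ 2. Then g(a, b, c) = m · g(a/m, b/m, c) + (m − 1)c. -/

import Mathlib

/-- **Johnson's formula.** Let `a, b, c` be positive integers with
`gcd(a,b,c) = 1` and `m = gcd(a,b)`. If `a/m ≥ 2`, `b/m ≥ 2` and `c ≥ 2`, then
`g(a,b,c) = m * g(a/m, b/m, c) + (m-1) * c`, where `g` denotes the Frobenius
number (the greatest integer not representable as a nonnegative integer
combination). -/
theorem johnson_formula (a b c : ℕ) (ha : 0 < a) (hb : 0 < b) (hc : 2 ≤ c)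
    (hgcd : Nat.gcd (Nat.gcd a b) c = 1)
    (ham : 2 ≤ a / Nat.gcd a b) (hbm : 2 ≤ b / Nat.gcd a b)
    (g' : ℕ)
    (hg' : IsGreatest {t : ℕ | ¬ ∃ x y z : ℕ,
        t = x * (a / Nat.gcd a b) + y * (b / Nat.gcd a b) + z * c} g') :
    IsGreatest {t : ℕ | ¬ ∃ x y z : ℕ, t = x * a + y * b + z * c}
      (Nat.gcd a b * g' + (Nat.gcd a b - 1) * c) := by
  obtain ⟨hg1, hg2⟩ := hg'
  set m := Nat.gcd a b with hm
  have hm0 : 0 < m := Nat.gcd_pos_of_pos_left _ ha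
  set a' := a / m with ha'
  set b' := b / m with hb'
  have haa : a = m * a' := (Nat.mul_div_cancel' (Nat.gcd_dvd_left a b)).symm
  have hbb : b = m * b' := (Nat.mul_div_cancel' (Nat.gcd_dvd_right a b)).symm
  have hmc : Nat.gcd m c = 1 := hgcd
  constructor
  · -- the candidate is not representable
    rintro ⟨x, y, z, hxyz⟩
    have E : m * g' + (m - 1) * c = m * (x * a') + (m * (y * b') + z * c) := by
      rw [haa, hbb] at hxyz; rw [hxyz]; ring
    have h1 : (m - 1) * c ≡ z * c [MOD m] := by
      have l : (m * g' + (m - 1) * c) % m = ((m - 1) * c) % m := Nat.mul_add_mod m g' _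
      have r : (m * (x * a') + (m * (y * b') + z * c)) % m = (z * c) % m := by
        rw [Nat.mul_add_mod, Nat.mul_add_mod]
      show ((m - 1) * c) % m = (z * c) % m
      rw [← l, ← r, E]
    have h2 : m - 1 ≡ z [MOD m] := Nat.ModEq.cancel_right_of_coprime hmc h1
    have h3 : z % m = m - 1 := by
      have := h2.symm
      unfold Nat.ModEq at this
      rwa [Nat.mod_eq_of_lt (by omega : m - 1 < m)] at this
    set k := z / m with hk
    have hz : z = m * k + (m - 1) := by
      have h4 := Nat.div_add_mod z m
      rw [← hk, h3] at h4
      omega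
    have E2 : m * g' + (m - 1) * c =
        m * (x * a' + y * b' + k * c) + (m - 1) * c := by
      rw [E, hz]; ring
    have E3 : g' = x * a' + y * b' + k * c :=
      Nat.eq_of_mul_eq_mul_left hm0 (Nat.add_right_cancel E2)
    exact hg1 ⟨x, y, k, E3⟩
  · -- upper bound
    intro t ht
    by_contra hlt
    push_neg at hlt
    -- find z0 < m with z0 * c ≡ t [MOD m]
    obtain ⟨z0, hz0m, hz0⟩ : ∃ z0, z0 < m ∧ z0 * c ≡ t [MOD m] := by
      rcases eq_or_lt_of_le (by omega : 1 ≤ m) with h1 | h1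
      · exact ⟨0, by omega, by
          show (0 * c) % m = t % m
          rw [← h1]; simp; omega⟩
      · obtain ⟨u, -, hu⟩ :=
          Nat.exists_mul_mod_eq_one_of_coprime (Nat.Coprime.symm hmc) h1
        refine ⟨t * u % m, Nat.mod_lt _ hm0, ?_⟩
        have s1 : (t * u % m) * c ≡ t * u * c [MOD m] :=
          Nat.ModEq.mul_right c (Nat.mod_modEq _ _)
        have s2 : c * u ≡ 1 [MOD m] := by
          show (c * u) % m = 1 % m
          rw [hu, Nat.mod_eq_of_lt h1]
        have s3 : t * (c * u) ≡ t * 1 [MOD m] := Nat.ModEq.mul_left t s2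
        have s4 : t * u * c = t * (c * u) := by ring
        calc (t * u % m) * c ≡ t * u * c [MOD m] := s1
          _ = t * (c * u) := s4
          _ ≡ t * 1 [MOD m] := s3
          _ = t := by ring
    have hz0c : z0 * c ≤ (m - 1) * c := Nat.mul_le_mul_right c (by omega)
    have hz0t : z0 * c ≤ t := by omega
    have hdvd : m ∣ t - z0 * c := (Nat.modEq_iff_dvd' hz0t).mp hz0
    obtain ⟨q, hq⟩ := hdvd
    have hqgt : g' < q := by
      have : m * g' < m * q := by omega
      exact Nat.lt_of_mul_lt_mul_left this
    -- q is representable in a', b', c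
    have hqrep : ∃ x y w : ℕ, q = x * a' + y * b' + w * c := by
      by_contra hq'
      exact absurd (hg2 hq') (not_le.mpr hqgt)
    obtain ⟨x, y, w, hxyw⟩ := hqrep
    refine ht ⟨x, y, m * w + z0, ?_⟩
    have ht' : t = m * q + z0 * c := by omega
    rw [ht', hxyw, haa, hbb]
    ring
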